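/- arXiv:2008.03664 — 2 statements merged into one kernel-verified Lean document; each statement's English description precedes it below -/
import Mathlib

section
/- For all u, v ∈ ℂ with u − v ∉ {0, cκ, −cκ}, the R-matrix satisfies the unitarity condition R(u,v) · R(v,u) = (1 − c²/(u−v)²) · (I ⊗ I). -/
open scoped Kronecker

noncomputable section

/-- Index set `{-n, …, n}` for matrices of size `N = 2n+1`. -/
abbrev Idx (n : ℕ) : Type := {i : ℤ // i ∈ Finset.Icc (-(n : ℤ)) (n : ℤ)}

/-- Negation `i ↦ -i` on the index set. -/
def Idx.neg {n : ℕ} (i : Idx n) : Idx n :=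
  ⟨-i.1, by
    have h := Finset.mem_Icc.mp i.2
    exact Finset.mem_Icc.mpr ⟨by omega, by omega⟩⟩

/-- Matrix unit `e_{i,j}`. -/
def matE {n : ℕ} (i j : Idx n) : Matrix (Idx n) (Idx n) ℂ :=
  Matrix.single i j 1

/-- `P = Σ_{i,j} e_{i,j} ⊗ e_{j,i}`. -/
def Pmat (n : ℕ) : Matrix (Idx n × Idx n) (Idx n × Idx n) ℂ :=
  ∑ i : Idx n, ∑ j : Idx n, matE i j ⊗ₖ matE j i

/-- `Q = Σ_{i,j} e_{i,j} ⊗ e_{-i,-j}`. -/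
def Qmat (n : ℕ) : Matrix (Idx n × Idx n) (Idx n × Idx n) ℂ :=
  ∑ i : Idx n, ∑ j : Idx n, matE i j ⊗ₖ matE i.neg j.neg

/-- `κ = n - 1/2`. -/
def kappa (n : ℕ) : ℂ := (n : ℂ) - 1 / 2

/-- The `o_{2n+1}`-invariant `R`-matrix
`R(u,v) = I⊗I + (c/(u−v)) P − (c/(u−v+cκ)) Q`. -/
def Rmat (n : ℕ) (c u v : ℂ) : Matrix (Idx n × Idx n) (Idx n × Idx n) ℂ :=
  1 + (c / (u - v)) • Pmat n - (c / (u - v + c * kappa n)) • Qmat n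

lemma Idx.neg_neg' {n : ℕ} (i : Idx n) : i.neg.neg = i := by
  simp [Idx.neg]

lemma Idx.eq_neg_comm {n : ℕ} (i j : Idx n) : i = j.neg ↔ j = i.neg :=
  ⟨fun h => by rw [h, Idx.neg_neg'], fun h => by rw [h, Idx.neg_neg']⟩

lemma Pmat_apply (n : ℕ) (p r : Idx n × Idx n) :
    Pmat n p r = if p.1 = r.2 ∧ p.2 = r.1 then 1 else 0 := by
  classical
  simp only [Pmat, Matrix.sum_apply, Matrix.kroneckerMap_apply, matE,
    Matrix.single, Matrix.of_apply]
  rw [Fintype.sum_eq_single p.1 (fun b hb => by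
    apply Finset.sum_eq_zero; intro j _
    rw [if_neg (fun h => hb h.1), zero_mul])]
  rw [Fintype.sum_eq_single r.1 (fun b hb => by
    rw [if_neg (fun h => hb h.2), zero_mul])]
  by_cases h1 : p.1 = r.2 <;> by_cases h2 : p.2 = r.1 <;>
    simp [h1, h2, eq_comm] <;> simp [Ne.symm h2]

lemma Qmat_apply (n : ℕ) (p r : Idx n × Idx n) :
    Qmat n p r = if p.2 = p.1.neg ∧ r.2 = r.1.neg then 1 else 0 := by
  classical
  simp only [Qmat, Matrix.sum_apply, Matrix.kroneckerMap_apply, matE,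
    Matrix.single, Matrix.of_apply]
  rw [Fintype.sum_eq_single p.1 (fun b hb => by
    apply Finset.sum_eq_zero; intro j _
    rw [if_neg (fun h => hb h.1), zero_mul])]
  rw [Fintype.sum_eq_single r.1 (fun b hb => by
    rw [if_neg (fun h => hb h.2), zero_mul])]
  by_cases h1 : p.2 = p.1.neg <;> by_cases h2 : r.2 = r.1.neg <;>
    simp [h1, h2, eq_comm]

lemma P_mul_P (n : ℕ) : Pmat n * Pmat n = 1 := by
  classical
  ext p r
  simp only [Matrix.mul_apply, Pmat_apply, Fintype.sum_prod_type]
  rw [Fintype.sum_eq_single p.2 (fun b hb => by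
    apply Finset.sum_eq_zero; intro j _
    rw [if_neg (fun h => hb h.2.symm), zero_mul])]
  rw [Fintype.sum_eq_single p.1 (fun b hb => by
    rw [if_neg (fun h => hb h.1.symm), zero_mul])]
  by_cases h : p = r <;> simp [h, Matrix.one_apply] <;>
    simp_all [Prod.ext_iff] <;> tauto

lemma P_mul_Q (n : ℕ) : Pmat n * Qmat n = Qmat n := by
  classical
  ext p r
  simp only [Matrix.mul_apply, Pmat_apply, Qmat_apply, Fintype.sum_prod_type]
  rw [Fintype.sum_eq_single p.2 (fun b hb => by
    apply Finset.sum_eq_zero; intro j _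
    rw [if_neg (fun h => hb h.2.symm), zero_mul])]
  rw [Fintype.sum_eq_single p.1 (fun b hb => by
    rw [if_neg (fun h => hb h.1.symm), zero_mul])]
  simp [Idx.eq_neg_comm p.1 p.2]

lemma Q_mul_P (n : ℕ) : Qmat n * Pmat n = Qmat n := by
  classical
  ext p r
  simp only [Matrix.mul_apply, Pmat_apply, Qmat_apply, Fintype.sum_prod_type]
  rw [Fintype.sum_eq_single r.2 (fun b hb => by
    apply Finset.sum_eq_zero; intro j _
    rw [if_neg (show ¬(b = r.2 ∧ j = r.1) from fun h => hb h.1), mul_zero])]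
  rw [Fintype.sum_eq_single r.1 (fun b hb => by
    rw [if_neg (show ¬(r.2 = r.2 ∧ b = r.1) from fun h => hb h.2), mul_zero])]
  simp [Idx.eq_neg_comm r.1 r.2]

lemma Q_mul_Q (n : ℕ) : Qmat n * Qmat n = ((2 * n + 1 : ℕ) : ℂ) • Qmat n := by
  classical
  ext p r
  simp only [Matrix.mul_apply, Qmat_apply, Fintype.sum_prod_type, Matrix.smul_apply,
    smul_eq_mul]
  by_cases h1 : p.2 = p.1.neg <;> by_cases h2 : r.2 = r.1.neg <;>
    simp [h1, h2] <;>
    (rw [show ((n:ℤ)+1+(n:ℤ)).toNat = 2*n+1 from by omega]; push_cast; ring)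

/-- the unitarity condition
`R(u,v)·R(v,u) = (1 − c²/(u−v)²)·(I ⊗ I)` for `u − v ∉ {0, cκ, −cκ}`. -/
theorem statement2 (n : ℕ) (hn : 1 ≤ n) (c : ℂ) (hc : c ≠ 0) (u v : ℂ)
    (h0 : u - v ≠ 0) (h1 : u - v ≠ c * kappa n) (h2 : u - v ≠ -(c * kappa n)) :
    Rmat n c u v * Rmat n c v u =
      (1 - c ^ 2 / (u - v) ^ 2) • (1 : Matrix (Idx n × Idx n) (Idx n × Idx n) ℂ) := by
  have hvu : v - u ≠ 0 := fun h => h0 (by linear_combination -h)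
  have hd1 : u - v + c * kappa n ≠ 0 := fun h => h2 (by linear_combination h)
  have hd2 : v - u + c * kappa n ≠ 0 := fun h => h1 (by linear_combination -h)
  unfold Rmat
  simp only [sub_mul, mul_sub, add_mul, mul_add, one_mul, mul_one,
    smul_mul_assoc, mul_smul_comm, P_mul_P, P_mul_Q, Q_mul_P, Q_mul_Q, smul_smul]
  match_scalars
  · field_simp
    ring
  · field_simp
    ring
  · field_simp
    simp only [kappa]
    push_cast
    ring

end
end

section
/- Suppose T : ℂ → M_N(A) satisfies the polynomial RTT relation: for all u, v ∈ ℂ, R̂(u,v) T₁(u) T₂(v) = T₂(v) T₁(u) R̂(u,v), where R̂(u,v) = (u−v)(u−v+cκ) (I⊗I) + c(u−v+cκ) P − c(u−v) Q. Then for every u ∈ ℂ there exists an element z(u) ∈ A such that for all −n ≤ i, j ≤ n: Σ_{m=−n}^{n} T_{−m,−i}(u−cκ) T_{m,j}(u) = δ_{i,j} z(u) and Σ_{m=−n}^{n} T_{i,m}(u) T_{−j,−m}(u−cκ) = δ_{i,j} z(u). -/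
open scoped Kronecker

noncomputable section

/-- The polynomial `R`-matrix
`R̂(u,v) = (u−v)(u−v+cκ)(I⊗I) + c(u−v+cκ)P − c(u−v)Q`. -/
def Rhat (n : ℕ) (c u v : ℂ) : Matrix (Idx n × Idx n) (Idx n × Idx n) ℂ :=
  ((u - v) * (u - v + c * kappa n)) • (1 : Matrix (Idx n × Idx n) (Idx n × Idx n) ℂ) +
    (c * (u - v + c * kappa n)) • Pmat n - (c * (u - v)) • Qmat n

/-- Negation as a permutation of the index set. -/
def Idx.negEquiv (n : ℕ) : Idx n ≃ Idx n :=
  Function.Involutive.toPerm Idx.neg Idx.neg_neg'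

lemma qmat_apply (n : ℕ) (a b x y : Idx n) :
    Qmat n (a,b) (x,y) = if b = a.neg ∧ y = x.neg then 1 else 0 := by
  simp only [Qmat, Matrix.sum_apply, Matrix.kroneckerMap_apply, matE,
    Matrix.single, Matrix.of_apply, ite_and]
  rw [Finset.sum_eq_single a]
  · rw [Finset.sum_eq_single x]
    · simp [ite_and, eq_comm]
    · intro j _ hj; simp [hj]
    · simp [Finset.mem_attach]
  · intro i _ hi
    rw [Finset.sum_eq_zero]
    intro j _; simp [hi]
  · simp [Finset.mem_attach]

lemma lhs_entry {n : ℕ} {A : Type*} [Ring A] [Algebra ℂ A]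
    (S S' : Matrix (Idx n) (Idx n) A) (a b c d : Idx n) :
    ((Qmat n).map (algebraMap ℂ A) * (S ⊗ₖ (1 : Matrix (Idx n) (Idx n) A)) *
      ((1 : Matrix (Idx n) (Idx n) A) ⊗ₖ S')) (a,b) (c,d)
    = if b = a.neg then ∑ x : Idx n, S x c * S' x.neg d else 0 := by
  simp [Matrix.mul_apply, Matrix.kroneckerMap_apply, Matrix.one_apply, qmat_apply,
    Matrix.map_apply, Fintype.sum_prod_type, apply_ite, ite_and,
    ite_mul, mul_ite, mul_zero, zero_mul, Finset.mul_sum, Finset.sum_mul]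
  split_ifs with h
  · rw [Finset.sum_comm]
    simp [Finset.sum_ite_eq', Finset.mem_attach]
  · exact fun h' => absurd h' h

lemma rhs_entry {n : ℕ} {A : Type*} [Ring A] [Algebra ℂ A]
    (S S' : Matrix (Idx n) (Idx n) A) (a b c d : Idx n) :
    (((1 : Matrix (Idx n) (Idx n) A) ⊗ₖ S') * (S ⊗ₖ (1 : Matrix (Idx n) (Idx n) A)) *
      (Qmat n).map (algebraMap ℂ A)) (a,b) (c,d)
    = if d = c.neg then ∑ x : Idx n, S' b x.neg * S a x else 0 := by
  simp [Matrix.mul_apply, Matrix.kroneckerMap_apply, Matrix.one_apply, qmat_apply,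
    Matrix.map_apply, Fintype.sum_prod_type, apply_ite, ite_and,
    ite_mul, mul_ite, mul_zero, zero_mul, Finset.mul_sum, Finset.sum_mul]
  split_ifs with h
  · exact fun h' => absurd h h'
  · exact fun h' => absurd h' h

lemma kappa_ne_zero (n : ℕ) : kappa n ≠ 0 := by
  unfold kappa
  intro h
  have h2 : ((2*n : ℕ) : ℂ) = ((1:ℕ) : ℂ) := by push_cast; linear_combination 2*h
  have := Nat.cast_injective (R := ℂ) h2
  omega

/-- if `T : ℂ → M_N(A)` satisfies the polynomial RTT relation,
then for every `u` there is a central-type element `z(u) ∈ A` with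
`Σ_m T_{−m,−i}(u−cκ) T_{m,j}(u) = δ_{i,j} z(u)` and
`Σ_m T_{i,m}(u) T_{−j,−m}(u−cκ) = δ_{i,j} z(u)` for all `i, j`. -/
theorem statement7 (n : ℕ) (hn : 1 ≤ n) (c : ℂ) (hc : c ≠ 0)
    {A : Type*} [Ring A] [Algebra ℂ A]
    (T : ℂ → Matrix (Idx n) (Idx n) A)
    (hT : ∀ u v : ℂ,
      (Rhat n c u v).map (algebraMap ℂ A) * (T u ⊗ₖ (1 : Matrix (Idx n) (Idx n) A)) *
          ((1 : Matrix (Idx n) (Idx n) A) ⊗ₖ T v) =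
        ((1 : Matrix (Idx n) (Idx n) A) ⊗ₖ T v) * (T u ⊗ₖ (1 : Matrix (Idx n) (Idx n) A)) *
          (Rhat n c u v).map (algebraMap ℂ A)) :
    ∀ u : ℂ, ∃ z : A, ∀ i j : Idx n,
      (∑ m : Idx n, T (u - c * kappa n) m.neg i.neg * T u m j =
        if i = j then z else 0) ∧
      (∑ m : Idx n, T u i m * T (u - c * kappa n) j.neg m.neg =
        if i = j then z else 0) := by
  intro u
  set w : ℂ := u - c * kappa n with hw
  set s : ℂ := c * c * kappa n with hs
  have hsne : s ≠ 0 := mul_ne_zero (mul_ne_zero hc hc) (kappa_ne_zero n)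
  have hR : Rhat n c w u = s • Qmat n := by
    simp only [Rhat, hw, hs]
    module
  have h := hT w u
  rw [hR] at h
  have hmap : (s • Qmat n).map (algebraMap ℂ A)
      = s • (Qmat n).map (algebraMap ℂ A) := by
    ext i j
    simp only [Matrix.map_apply, Matrix.smul_apply]
    rw [smul_eq_mul, map_mul, Algebra.smul_def]
  rw [hmap, smul_mul_assoc, smul_mul_assoc, mul_smul_comm] at h
  have h2 : (Qmat n).map (algebraMap ℂ A) * (T w ⊗ₖ (1 : Matrix (Idx n) (Idx n) A)) *
        ((1 : Matrix (Idx n) (Idx n) A) ⊗ₖ T u) =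
      ((1 : Matrix (Idx n) (Idx n) A) ⊗ₖ T u) * (T w ⊗ₖ (1 : Matrix (Idx n) (Idx n) A)) *
        (Qmat n).map (algebraMap ℂ A) := by
    have := congrArg (fun X => s⁻¹ • X) h
    simpa [smul_smul, inv_mul_cancel₀ hsne] using this
  -- entrywise identity
  have key : ∀ a b c' d : Idx n,
      (if b = a.neg then ∑ x : Idx n, T w x c' * T u x.neg d else 0) =
      (if d = c'.neg then ∑ x : Idx n, T u b x.neg * T w a x else 0) := by
    intro a b c' d
    rw [← lhs_entry (T w) (T u) a b c' d, ← rhs_entry (T w) (T u) a b c' d, h2]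
  have h0 : (0 : ℤ) ∈ Finset.Icc (-(n : ℤ)) (n : ℤ) := by
    simp [Finset.mem_Icc]
  set i0 : Idx n := ⟨0, h0⟩ with hi0
  refine ⟨∑ x : Idx n, T u i0.neg x.neg * T w i0 x, ?_⟩
  set z : A := ∑ x : Idx n, T u i0.neg x.neg * T w i0 x with hz
  -- Fact1 : S1 c' c'.neg = z
  have fact1 : ∀ c' : Idx n, (∑ x : Idx n, T w x c' * T u x.neg c'.neg) = z := by
    intro c'
    have := key i0 i0.neg c' c'.neg
    simpa [hz] using this
  -- Fact2 : S2 a a.neg = z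
  have fact2 : ∀ a : Idx n, (∑ x : Idx n, T u a.neg x.neg * T w a x) = z := by
    intro a
    have h' := key a a.neg i0 i0.neg
    rw [if_pos rfl, if_pos rfl] at h'
    rw [← h']
    exact fact1 i0
  -- Fact3 : d ≠ c'.neg → S1 c' d = 0
  have fact3 : ∀ c' d : Idx n, d ≠ c'.neg →
      (∑ x : Idx n, T w x c' * T u x.neg d) = 0 := by
    intro c' d hd
    have := key i0 i0.neg c' d
    simpa [hd] using this
  -- Fact4 : b ≠ a.neg → S2 a b = 0
  have fact4 : ∀ a b : Idx n, b ≠ a.neg →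
      (∑ x : Idx n, T u b x.neg * T w a x) = 0 := by
    intro a b hb
    have := key a b i0 i0.neg
    simpa [hb] using this.symm
  intro i j
  constructor
  · have hre : (∑ m : Idx n, T w m.neg i.neg * T u m j)
        = ∑ x : Idx n, T w x i.neg * T u x.neg j := by
      refine Fintype.sum_equiv (Idx.negEquiv n) _ _ ?_
      intro m
      simp [Idx.negEquiv, Function.Involutive.toPerm, Idx.neg_neg']
    rw [hre]
    by_cases hij : i = j
    · subst hij
      rw [if_pos rfl]
      have := fact1 i.neg
      rwa [Idx.neg_neg'] at this
    · rw [if_neg hij]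
      exact fact3 i.neg j (by rw [Idx.neg_neg']; exact Ne.symm hij)
  · have hre : (∑ m : Idx n, T u i m * T w j.neg m.neg)
        = ∑ x : Idx n, T u i x.neg * T w j.neg x := by
      refine Fintype.sum_equiv (Idx.negEquiv n) _ _ ?_
      intro m
      simp [Idx.negEquiv, Function.Involutive.toPerm, Idx.neg_neg']
    rw [hre]
    by_cases hij : i = j
    · subst hij
      rw [if_pos rfl]
      have := fact2 i.neg
      rwa [Idx.neg_neg'] at this
    · rw [if_neg hij]
      exact fact4 j.neg i (by rw [Idx.neg_neg']; exact hij)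

end
end
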